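/- Let (Ω, Σ, P) be a probability space, let f : (0,∞) → ℝ be a four times differentiable function with f'''(x) ≥ 0 and f''''(x) ≥ 0 for every x > 0, and let X : Ω → (0,∞) be an integrable random variable with right-skewed distribution, i.e., E[(X − E[X])^3] ≥ 0, such that f(X), (X − E[X])^2, and (X − E[X])^3 are integrable. Then E[f(X)] − f(E[X]) ≥ (1/2)·f''(E[X])·Var(X). -/

import Mathlib

open MeasureTheory ProbabilityTheory Finset

private lemma mono_aux (g g' : ℝ → ℝ) {a b : ℝ} (ha : 0 < a) (hab : a ≤ b)
    (hg : ∀ x : ℝ, 0 < x → HasDerivAt g (g' x) x)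
    (hg' : ∀ x ∈ Set.Icc a b, 0 ≤ g' x) : g a ≤ g b := by
  have hsub : Set.Icc a b ⊆ Set.Ioi (0:ℝ) := fun x hx => lt_of_lt_of_le ha hx.1
  have hmono : MonotoneOn g (Set.Icc a b) := by
    apply monotoneOn_of_deriv_nonneg (convex_Icc a b)
    · exact fun x hx => (hg x (hsub hx)).continuousAt.continuousWithinAt
    · intro x hx
      rw [interior_Icc] at hx
      exact (hg x (hsub (Set.Ioo_subset_Icc_self hx))).differentiableAt.differentiableWithinAt
    · intro x hx
      rw [interior_Icc] at hx
      rw [(hg x (hsub (Set.Ioo_subset_Icc_self hx))).deriv]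
      exact hg' x (Set.Ioo_subset_Icc_self hx)
  exact hmono (Set.left_mem_Icc.2 hab) (Set.right_mem_Icc.2 hab) hab

private lemma anti_aux (g g' : ℝ → ℝ) {a b : ℝ} (ha : 0 < a) (hab : a ≤ b)
    (hg : ∀ x : ℝ, 0 < x → HasDerivAt g (g' x) x)
    (hg' : ∀ x ∈ Set.Icc a b, g' x ≤ 0) : g b ≤ g a := by
  have := mono_aux (fun x => -g x) (fun x => -g' x) ha hab
    (fun x hx => (hg x hx).neg) (fun x hx => neg_nonneg.2 (hg' x hx))
  linarith

/-- Let `f : (0,∞) → ℝ` be four times differentiable (with successive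
derivatives `f1, f2, f3, f4`) with `f'''(x) ≥ 0` and `f''''(x) ≥ 0` for every `x > 0`, and let
`X : Ω → (0,∞)` be an integrable random variable with right-skewed distribution, i.e.,
`E[(X − E[X])^3] ≥ 0`, such that `f(X)`, `(X − E[X])^2` and `(X − E[X])^3` are integrable.
Then `E[f(X)] − f(E[X]) ≥ (1/2)·f''(E[X])·Var(X)`. -/
theorem jensen_gap_superquadratic_lower
    {Ω : Type*} [MeasurableSpace Ω] (P : Measure Ω) [IsProbabilityMeasure P]
    (f f1 f2 f3 f4 : ℝ → ℝ)
    (hd1 : ∀ x : ℝ, 0 < x → HasDerivAt f (f1 x) x)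
    (hd2 : ∀ x : ℝ, 0 < x → HasDerivAt f1 (f2 x) x)
    (hd3 : ∀ x : ℝ, 0 < x → HasDerivAt f2 (f3 x) x)
    (hd4 : ∀ x : ℝ, 0 < x → HasDerivAt f3 (f4 x) x)
    (hf3 : ∀ x : ℝ, 0 < x → 0 ≤ f3 x)
    (hf4 : ∀ x : ℝ, 0 < x → 0 ≤ f4 x)
    (X : Ω → ℝ) (hX : ∀ ω, 0 < X ω)
    (hXint : Integrable X P)
    (hskew : 0 ≤ ∫ ω, (X ω - ∫ ω', X ω' ∂P) ^ 3 ∂P)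
    (hfXint : Integrable (fun ω => f (X ω)) P)
    (hm2 : Integrable (fun ω => (X ω - ∫ ω', X ω' ∂P) ^ 2) P)
    (hm3 : Integrable (fun ω => (X ω - ∫ ω', X ω' ∂P) ^ 3) P) :
    (1 / 2) * f2 (∫ ω, X ω ∂P) * (∫ ω, (X ω - ∫ ω', X ω' ∂P) ^ 2 ∂P)
      ≤ (∫ ω, f (X ω) ∂P) - f (∫ ω, X ω ∂P) := by
  set μ := ∫ ω, X ω ∂P with hμdef
  -- the mean is positive
  have hμ : 0 < μ := by
    rw [hμdef]
    rw [integral_pos_iff_support_of_nonneg (fun ω => (hX ω).le) hXint]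
    have : Function.support X = Set.univ := by
      ext ω; simp [Function.support, (hX ω).ne']
    rw [this]
    simp
  -- f3 is monotone on (0, ∞)
  have h3mono : ∀ a b : ℝ, 0 < a → a ≤ b → f3 a ≤ f3 b := fun a b ha hab =>
    mono_aux f3 f4 ha hab hd4 (fun x hx => hf4 x (lt_of_lt_of_le ha hx.1))
  -- second remainder g2 ≥ 0
  set g2 : ℝ → ℝ := fun x => f2 x - f2 μ - f3 μ * (x - μ) with hg2def
  have hg2d : ∀ x : ℝ, 0 < x → HasDerivAt g2 (f3 x - f3 μ) x := by
    intro x hx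
    have h := ((hd3 x hx).sub_const (f2 μ)).sub
      (((hasDerivAt_id x).sub_const μ).const_mul (f3 μ))
    refine h.congr_deriv ?_
    ring
  have hg2μ : g2 μ = 0 := by simp [hg2def]
  have hg2 : ∀ x : ℝ, 0 < x → 0 ≤ g2 x := by
    intro x hx
    rcases le_total x μ with h | h
    · have := anti_aux g2 (fun y => f3 y - f3 μ) hx h hg2d
        (fun y hy => sub_nonpos.2 (h3mono y μ (lt_of_lt_of_le hx hy.1) hy.2))
      linarith [hg2μ ▸ this]
    · have := mono_aux g2 (fun y => f3 y - f3 μ) hμ h hg2d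
        (fun y hy => sub_nonneg.2 (h3mono μ y hμ hy.1))
      linarith [hg2μ ▸ this]
  -- first remainder g1: ≤ 0 below μ, ≥ 0 above μ
  set g1 : ℝ → ℝ := fun x => f1 x - f1 μ - f2 μ * (x - μ) - f3 μ / 2 * (x - μ) ^ 2 with hg1def
  have hg1d : ∀ x : ℝ, 0 < x → HasDerivAt g1 (g2 x) x := by
    intro x hx
    have h := (((hd2 x hx).sub_const (f1 μ)).sub
      (((hasDerivAt_id x).sub_const μ).const_mul (f2 μ))).sub
      ((((hasDerivAt_id x).sub_const μ).pow 2).const_mul (f3 μ / 2))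
    refine h.congr_deriv ?_
    simp [hg2def]
    ring
  have hg1μ : g1 μ = 0 := by simp [hg1def]
  have hg1lo : ∀ x : ℝ, 0 < x → x ≤ μ → g1 x ≤ 0 := by
    intro x hx h
    have := mono_aux g1 g2 hx h hg1d
      (fun y hy => hg2 y (lt_of_lt_of_le hx hy.1))
    linarith [hg1μ ▸ this]
  have hg1hi : ∀ x : ℝ, μ ≤ x → 0 ≤ g1 x := by
    intro x h
    have := mono_aux g1 g2 hμ h hg1d
      (fun y hy => hg2 y (lt_of_lt_of_le hμ hy.1))
    linarith [hg1μ ▸ this]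
  -- main remainder g ≥ 0
  set g : ℝ → ℝ := fun x => f x - f μ - f1 μ * (x - μ) - f2 μ / 2 * (x - μ) ^ 2
    - f3 μ / 6 * (x - μ) ^ 3 with hgdef
  have hgd : ∀ x : ℝ, 0 < x → HasDerivAt g (g1 x) x := by
    intro x hx
    have h := ((((hd1 x hx).sub_const (f μ)).sub
      (((hasDerivAt_id x).sub_const μ).const_mul (f1 μ))).sub
      ((((hasDerivAt_id x).sub_const μ).pow 2).const_mul (f2 μ / 2))).sub
      ((((hasDerivAt_id x).sub_const μ).pow 3).const_mul (f3 μ / 6))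
    refine h.congr_deriv ?_
    simp [hg1def]
    ring
  have hgμ : g μ = 0 := by simp [hgdef]
  have hg : ∀ x : ℝ, 0 < x → 0 ≤ g x := by
    intro x hx
    rcases le_total x μ with h | h
    · have := anti_aux g g1 hx h hgd
        (fun y hy => hg1lo y (lt_of_lt_of_le hx hy.1) hy.2)
      linarith [hgμ ▸ this]
    · have := mono_aux g g1 hμ h hgd (fun y hy => hg1hi y hy.1)
      linarith [hgμ ▸ this]
  -- pointwise Taylor lower bound
  have key : ∀ ω, f μ + f1 μ * (X ω - μ) + f2 μ / 2 * (X ω - μ) ^ 2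
      + f3 μ / 6 * (X ω - μ) ^ 3 ≤ f (X ω) := by
    intro ω
    have := hg (X ω) (hX ω)
    simp only [hgdef] at this
    linarith
  -- integrate
  have hint1 : Integrable (fun ω => X ω - μ) P := hXint.sub (integrable_const μ)
  have hzero : ∫ ω, (X ω - μ) ∂P = 0 := by
    rw [integral_sub hXint (integrable_const μ)]
    simp [hμdef]
  have hLHSint : Integrable (fun ω => f μ + f1 μ * (X ω - μ) + f2 μ / 2 * (X ω - μ) ^ 2
      + f3 μ / 6 * (X ω - μ) ^ 3) P :=
    (((integrable_const (f μ)).add (hint1.const_mul (f1 μ))).add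
      (hm2.const_mul (f2 μ / 2))).add (hm3.const_mul (f3 μ / 6))
  have hint_a : Integrable (fun ω => f μ + f1 μ * (X ω - μ)) P :=
    (integrable_const (f μ)).add (hint1.const_mul (f1 μ))
  have hint_b : Integrable (fun ω => f μ + f1 μ * (X ω - μ) + f2 μ / 2 * (X ω - μ) ^ 2) P :=
    hint_a.add (hm2.const_mul (f2 μ / 2))
  have e1 : ∫ ω, (f μ + f1 μ * (X ω - μ) + f2 μ / 2 * (X ω - μ) ^ 2
      + f3 μ / 6 * (X ω - μ) ^ 3) ∂P
      = (∫ ω, (f μ + f1 μ * (X ω - μ) + f2 μ / 2 * (X ω - μ) ^ 2) ∂P)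
        + ∫ ω, f3 μ / 6 * (X ω - μ) ^ 3 ∂P :=
    integral_add hint_b (hm3.const_mul (f3 μ / 6))
  have e2 : ∫ ω, (f μ + f1 μ * (X ω - μ) + f2 μ / 2 * (X ω - μ) ^ 2) ∂P
      = (∫ ω, (f μ + f1 μ * (X ω - μ)) ∂P) + ∫ ω, f2 μ / 2 * (X ω - μ) ^ 2 ∂P :=
    integral_add hint_a (hm2.const_mul (f2 μ / 2))
  have e3 : ∫ ω, (f μ + f1 μ * (X ω - μ)) ∂P
      = (∫ ω, (f μ : ℝ) ∂P) + ∫ ω, f1 μ * (X ω - μ) ∂P :=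
    integral_add (integrable_const (f μ)) (hint1.const_mul (f1 μ))
  have hI : ∫ ω, (f μ + f1 μ * (X ω - μ) + f2 μ / 2 * (X ω - μ) ^ 2
      + f3 μ / 6 * (X ω - μ) ^ 3) ∂P
      = f μ + f2 μ / 2 * (∫ ω, (X ω - μ) ^ 2 ∂P) + f3 μ / 6 * (∫ ω, (X ω - μ) ^ 3 ∂P) := by
    rw [e1, e2, e3, integral_const_mul, integral_const_mul, integral_const_mul,
      integral_const, hzero]
    simp
  have hmono := integral_mono hLHSint hfXint key
  rw [hI] at hmono
  have hc3 : 0 ≤ f3 μ / 6 * (∫ ω, (X ω - μ) ^ 3 ∂P) :=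
    mul_nonneg (by linarith [hf3 μ hμ]) hskew
  linarith
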